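/- Suppose A_link > 1, A_adjacency > A_link·C, and A_onehot > A_adjacency·m + A_link·C, and suppose C ≥ Δ(G) + 1. Then every global minimizer (x*, y*) of H_MGC satisfies: (iii) ∑_{c=1}^{C} x*_{v,c} = 1 for every vertex v; (ii) x*_{u,c}·x*_{v,c} = 0 for every edge {u,v} ∈ E and every color c; (i) y*_c = 1 if and only if ∑_{v∈V} x*_{v,c} ≥ 1; and (iv) the number of used colors |{c : y*_c = 1}| equals the minimum of |f(V)| over all proper colorings f of G with at most C colors. -/

import Mathlib

open Finset

/-- One-hot penalty term: `A_onehot · ∑_v (1 − ∑_c x_{v,c})²`. -/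
noncomputable def Honehot {V : Type*} [Fintype V] (C : ℕ) (Aoh : ℝ)
    (x : V → Fin C → ℝ) : ℝ :=
  Aoh * ∑ v : V, (1 - ∑ c : Fin C, x v c) ^ 2

/-- Adjacency penalty term: `A_adjacency · ∑_{{u,v}∈E} ∑_c x_{u,c} x_{v,c}`. -/
noncomputable def Hadjacency {V : Type*} [Fintype V] [DecidableEq V]
    (G : SimpleGraph V) [DecidableRel G.Adj] (C : ℕ) (Aadj : ℝ)
    (x : V → Fin C → ℝ) : ℝ :=
  Aadj * ∑ e ∈ G.edgeFinset,
    Sym2.lift ⟨fun u v => ∑ c : Fin C, x u c * x v c,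
      fun u v => Finset.sum_congr rfl (fun c _ => mul_comm _ _)⟩ e

/-- Color-count term: `∑_c y_c`. -/
noncomputable def Hcount (C : ℕ) (y : Fin C → ℝ) : ℝ := ∑ c : Fin C, y c

/-- Linking term: `A_link · ∑_v ∑_c x_{v,c}(1 − y_c)`. -/
noncomputable def Hlink {V : Type*} [Fintype V] (C : ℕ) (Alink : ℝ)
    (x : V → Fin C → ℝ) (y : Fin C → ℝ) : ℝ :=
  Alink * ∑ v : V, ∑ c : Fin C, x v c * (1 - y c)

/-- The one-hot QUBO Hamiltonian for minimum graph coloring. -/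
noncomputable def HMGC {V : Type*} [Fintype V] [DecidableEq V]
    (G : SimpleGraph V) [DecidableRel G.Adj] (C : ℕ) (Aoh Aadj Alink : ℝ)
    (x : V → Fin C → ℝ) (y : Fin C → ℝ) : ℝ :=
  Honehot C Aoh x + Hadjacency G C Aadj x + Hcount C y + Hlink C Alink x y

lemma sum_binary {ι : Type*} [Fintype ι] {g : ι → ℝ}
    [DecidablePred fun i => g i = 1] (h : ∀ i, g i = 0 ∨ g i = 1) :
    ∑ i, g i = ((univ.filter fun i => g i = 1).card : ℝ) := by
  rw [← Finset.sum_filter_add_sum_filter_not univ (fun i => g i = 1) g]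
  have h1 : ∑ i ∈ univ.filter (fun i => g i = 1), g i
      = ((univ.filter fun i => g i = 1).card : ℝ) := by
    rw [Finset.sum_congr rfl (fun i hi => (Finset.mem_filter.mp hi).2),
      Finset.sum_const, nsmul_eq_mul, mul_one]
  have h2 : ∑ i ∈ univ.filter (fun i => ¬ g i = 1), g i = 0 :=
    Finset.sum_eq_zero fun i hi => (h i).resolve_right (Finset.mem_filter.mp hi).2
  rw [h1, h2, add_zero]

lemma one_le_sum_iff {ι : Type*} [Fintype ι] {g : ι → ℝ} (h : ∀ i, g i = 0 ∨ g i = 1) :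
    (1 ≤ ∑ i, g i) ↔ ∃ i, g i = 1 := by
  classical
  rw [sum_binary h]
  constructor
  · intro h1
    have : 0 < (univ.filter fun i => g i = 1).card := by exact_mod_cast h1
    obtain ⟨i, hi⟩ := Finset.card_pos.mp this
    exact ⟨i, (Finset.mem_filter.mp hi).2⟩
  · rintro ⟨i, hi⟩
    have : 0 < (univ.filter fun i => g i = 1).card :=
      Finset.card_pos.mpr ⟨i, Finset.mem_filter.mpr ⟨Finset.mem_univ i, hi⟩⟩
    exact_mod_cast Nat.one_le_iff_ne_zero.mpr (Nat.pos_iff_ne_zero.mp this)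

lemma greedy {V : Type*} [Fintype V] [DecidableEq V] (G : SimpleGraph V) [DecidableRel G.Adj]
    {C : ℕ} (hC : G.maxDegree + 1 ≤ C) :
    ∃ f : V → Fin C, ∀ u v, G.Adj u v → f u ≠ f v := by
  have hCpos : 0 < C := Nat.lt_of_lt_of_le (Nat.succ_pos _) hC
  have key : ∀ s : Finset V, ∃ f : V → Fin C,
      ∀ u ∈ s, ∀ v ∈ s, G.Adj u v → f u ≠ f v := by
    intro s
    induction s using Finset.induction_on with
    | empty => exact ⟨fun _ => ⟨0, hCpos⟩, by simp⟩
    | insert _ _ hat _ =>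
      rename_i a t ih
      obtain ⟨f, hf⟩ := ih
      have hcard : ((G.neighborFinset a).image f).card < Fintype.card (Fin C) := by
        rw [Fintype.card_fin]
        calc ((G.neighborFinset a).image f).card ≤ (G.neighborFinset a).card :=
              Finset.card_image_le
          _ = G.degree a := G.card_neighborFinset_eq_degree a
          _ ≤ G.maxDegree := G.degree_le_maxDegree a
          _ < C := hC
      have hne : ((G.neighborFinset a).image f) ≠ univ :=
        (Finset.card_lt_iff_ne_univ _).mp hcard
      obtain ⟨c, hc⟩ : ∃ c, c ∉ (G.neighborFinset a).image f := by
        by_contra hall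
        push_neg at hall
        exact hne (Finset.eq_univ_iff_forall.mpr hall)
      refine ⟨Function.update f a c, ?_⟩
      intro u hu v hv hadj
      rcases Finset.mem_insert.mp hu with rfl | hu' <;>
        rcases Finset.mem_insert.mp hv with rfl | hv'
      · exact absurd hadj (G.irrefl)
      · have hva : v ≠ u := fun h => hat (h ▸ hv')
        rw [Function.update_self, Function.update_of_ne hva]
        intro h
        exact hc (Finset.mem_image.mpr ⟨v, (G.mem_neighborFinset _ _).mpr hadj, h.symm⟩)
      · have hua : u ≠ v := fun h => hat (h ▸ hu')
        rw [Function.update_self, Function.update_of_ne hua]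
        intro h
        exact hc (Finset.mem_image.mpr ⟨u, (G.mem_neighborFinset _ _).mpr hadj.symm, h⟩)
      · have hua : u ≠ a := fun h => hat (h ▸ hu')
        have hva : v ≠ a := fun h => hat (h ▸ hv')
        rw [Function.update_of_ne hua, Function.update_of_ne hva]
        exact hf u hu' v hv' hadj
  obtain ⟨f, hf⟩ := key univ
  exact ⟨f, fun u v h => hf u (Finset.mem_univ u) v (Finset.mem_univ v) h⟩

open Classical in
lemma HMGC_ref {V : Type*} [Fintype V] [DecidableEq V] (G : SimpleGraph V)
    [DecidableRel G.Adj] (C : ℕ) (Aoh Aadj Alink : ℝ) (f : V → Fin C)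
    (hf : ∀ u v, G.Adj u v → f u ≠ f v) :
    HMGC G C Aoh Aadj Alink (fun v c => if f v = c then 1 else 0)
      (fun c => if c ∈ univ.image f then 1 else 0) = ((univ.image f).card : ℝ) := by
  unfold HMGC Honehot Hadjacency Hcount Hlink
  have h1 : ∀ v : V, ∑ c : Fin C, (if f v = c then (1:ℝ) else 0) = 1 := by
    intro v; simp
  have h2 : ∑ e ∈ G.edgeFinset,
      Sym2.lift ⟨fun u v => ∑ c : Fin C,
        (if f u = c then (1:ℝ) else 0) * (if f v = c then (1:ℝ) else 0),
        fun u v => Finset.sum_congr rfl (fun c _ => mul_comm _ _)⟩ e = 0 := by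
    apply Finset.sum_eq_zero
    intro e he
    revert he
    refine Sym2.inductionOn e ?_
    intro u v he
    rw [Sym2.lift_mk]
    have hadj : G.Adj u v := by
      rwa [SimpleGraph.mem_edgeFinset, SimpleGraph.mem_edgeSet] at he
    show (∑ c : Fin C, (if f u = c then (1:ℝ) else 0) * (if f v = c then (1:ℝ) else 0)) = 0
    apply Finset.sum_eq_zero
    intro c _
    by_cases h : f u = c
    · have hv : f v ≠ c := fun hv => hf u v hadj (h.trans hv.symm)
      simp [h, hv]
    · simp [h]
  have h3 : ∑ c : Fin C, (if c ∈ univ.image f then (1:ℝ) else 0)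
      = ((univ.image f).card : ℝ) := by
    rw [Finset.sum_boole]
    congr 1
    rw [Finset.filter_mem_eq_inter, Finset.univ_inter]
  have h4 : ∑ v : V, ∑ c : Fin C, (if f v = c then (1:ℝ) else 0)
      * (1 - if c ∈ univ.image f then (1:ℝ) else 0) = 0 := by
    apply Finset.sum_eq_zero
    intro v _
    apply Finset.sum_eq_zero
    intro c _
    by_cases h : f v = c
    · have : c ∈ univ.image f := Finset.mem_image.mpr ⟨v, Finset.mem_univ v, h⟩
      simp [h, this]
    · simp [h]
  rw [h2, h3, h4]
  simp [h1]

lemma Hcount_update {C : ℕ} (y : Fin C → ℝ) (c : Fin C) (b : ℝ) :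
    Hcount C (Function.update y c b) = Hcount C y - y c + b := by
  unfold Hcount
  classical
  rw [← Finset.add_sum_erase _ (fun c' => Function.update y c b c') (Finset.mem_univ c),
    ← Finset.add_sum_erase _ y (Finset.mem_univ c),
    Finset.sum_congr rfl (fun c' hc' =>
      Function.update_of_ne (Finset.ne_of_mem_erase hc') b y),
    Function.update_self]
  ring

lemma Hlink_update {V : Type*} [Fintype V] {C : ℕ} (Alink : ℝ)
    (x : V → Fin C → ℝ) (y : Fin C → ℝ) (c : Fin C) (b : ℝ) :
    Hlink C Alink x (Function.update y c b)
      = Hlink C Alink x y + Alink * ((y c - b) * ∑ v : V, x v c) := by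
  unfold Hlink
  classical
  rw [← mul_add]
  congr 1
  rw [Finset.mul_sum, ← Finset.sum_add_distrib]
  apply Finset.sum_congr rfl
  intro v _
  rw [← Finset.add_sum_erase _ (fun c' => x v c' * (1 - Function.update y c b c'))
      (Finset.mem_univ c),
    ← Finset.add_sum_erase _ (fun c' => x v c' * (1 - y c')) (Finset.mem_univ c),
    Finset.sum_congr rfl (fun c' hc' => by
      rw [Function.update_of_ne (Finset.ne_of_mem_erase hc') b y]),
    Function.update_self]
  ring

open Classical in
/-- Sufficient one-hot QUBO penalties for minimum graph coloring:
every global minimizer is one-hot, properly colored, has faithful indicators,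
and uses the minimum possible number of colors. -/
theorem onehot_penalties_sufficient
    {V : Type*} [Fintype V] [DecidableEq V] [Nonempty V]
    (G : SimpleGraph V) [DecidableRel G.Adj]
    (C : ℕ) (hC : 1 ≤ C) (hCdeg : G.maxDegree + 1 ≤ C)
    (Aoh Aadj Alink : ℝ)
    (hAohpos : 0 < Aoh) (hAadjpos : 0 < Aadj) (hAlinkpos : 0 < Alink)
    (h1 : 1 < Alink)
    (h2 : Alink * (C : ℝ) < Aadj)
    (h3 : Aadj * (G.edgeFinset.card : ℝ) + Alink * (C : ℝ) < Aoh)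
    (x : V → Fin C → ℝ) (y : Fin C → ℝ)
    (hx : ∀ v c, x v c = 0 ∨ x v c = 1) (hy : ∀ c, y c = 0 ∨ y c = 1)
    (hmin : ∀ (x' : V → Fin C → ℝ) (y' : Fin C → ℝ),
      (∀ v c, x' v c = 0 ∨ x' v c = 1) → (∀ c, y' c = 0 ∨ y' c = 1) →
      HMGC G C Aoh Aadj Alink x y ≤ HMGC G C Aoh Aadj Alink x' y') :
    (∀ v : V, ∑ c : Fin C, x v c = 1) ∧
    (∀ u v : V, G.Adj u v → ∀ c : Fin C, x u c * x v c = 0) ∧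
    (∀ c : Fin C, y c = 1 ↔ 1 ≤ ∑ v : V, x v c) ∧
    IsLeast
      {k : ℕ | ∃ f : V → Fin C, (∀ u v, G.Adj u v → f u ≠ f v) ∧
        (Finset.univ.image f).card = k}
      ((Finset.univ.filter fun c : Fin C => y c = 1).card) := by
  have hx0 : ∀ v c, 0 ≤ x v c := fun v c => by rcases hx v c with h | h <;> simp [h]
  have hy1 : ∀ c, y c ≤ 1 := fun c => by rcases hy c with h | h <;> simp [h]
  have hy0 : ∀ c, 0 ≤ y c := fun c => by rcases hy c with h | h <;> simp [h]
  have hC1 : (1:ℝ) ≤ (C:ℝ) := by exact_mod_cast hC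
  have hm0 : (0:ℝ) ≤ Aadj * (G.edgeFinset.card : ℝ) :=
    mul_nonneg hAadjpos.le (Nat.cast_nonneg _)
  have hAC : (C:ℝ) < Aadj := by nlinarith
  -- nonnegativity of the four terms
  have honn : 0 ≤ Honehot C Aoh x :=
    mul_nonneg hAohpos.le (Finset.sum_nonneg fun v _ => sq_nonneg _)
  have hedge_nn : ∀ e ∈ G.edgeFinset,
      (0:ℝ) ≤ Sym2.lift ⟨fun u v => ∑ c : Fin C, x u c * x v c,
        fun u v => Finset.sum_congr rfl (fun c _ => mul_comm _ _)⟩ e := by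
    intro e he
    revert he
    refine Sym2.inductionOn e ?_
    intro u v _
    rw [Sym2.lift_mk]
    show (0:ℝ) ≤ ∑ c : Fin C, x u c * x v c
    exact Finset.sum_nonneg fun c _ => mul_nonneg (hx0 u c) (hx0 v c)
  have hann : 0 ≤ Hadjacency G C Aadj x :=
    mul_nonneg hAadjpos.le (Finset.sum_nonneg hedge_nn)
  have hcnn : 0 ≤ Hcount C y := Finset.sum_nonneg fun c _ => hy0 c
  have hlnn : 0 ≤ Hlink C Alink x y := by
    refine mul_nonneg hAlinkpos.le (Finset.sum_nonneg fun v _ =>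
      Finset.sum_nonneg fun c _ => mul_nonneg (hx0 v c) ?_)
    linarith [hy1 c]
  -- upper bound from reference configurations
  have hHle : ∀ f : V → Fin C, (∀ u v, G.Adj u v → f u ≠ f v) →
      HMGC G C Aoh Aadj Alink x y ≤ ((univ.image f).card : ℝ) := by
    intro f hf
    rw [← HMGC_ref G C Aoh Aadj Alink f hf]
    refine hmin _ _ (fun v c => ?_) (fun c => ?_)
    · by_cases h : f v = c <;> simp [h]
    · by_cases h : c ∈ univ.image f <;> simp [h]
  obtain ⟨g, hg⟩ := greedy G hCdeg
  have hHC : HMGC G C Aoh Aadj Alink x y ≤ (C:ℝ) := by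
    refine (hHle g hg).trans ?_
    have : (univ.image g).card ≤ C := by
      simpa [Fintype.card_fin] using Finset.card_le_univ (univ.image g)
    exact_mod_cast this
  have hsplit : HMGC G C Aoh Aadj Alink x y
      = Honehot C Aoh x + Hadjacency G C Aadj x + Hcount C y + Hlink C Alink x y := rfl
  -- (iii) one-hot
  have hone : ∀ v : V, ∑ c : Fin C, x v c = 1 := by
    intro v
    by_contra hne
    have hsum := sum_binary (hx v)
    set n := (univ.filter fun c : Fin C => x v c = 1).card with hn
    have hn1 : n ≠ 1 := by
      intro h; apply hne; rw [hsum, h]; norm_num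
    have hkey : (1:ℝ) ≤ (1 - ∑ c : Fin C, x v c) ^ 2 := by
      rw [hsum]
      rcases Nat.lt_or_ge n 1 with h | h
      · have h0 : n = 0 := Nat.lt_one_iff.mp h
        rw [h0]; norm_num
      · have h2' : 2 ≤ n := by omega
        have : (2:ℝ) ≤ (n:ℝ) := by exact_mod_cast h2'
        nlinarith
    have hterm : (1:ℝ) ≤ ∑ v' : V, (1 - ∑ c : Fin C, x v' c) ^ 2 :=
      hkey.trans (Finset.single_le_sum
        (f := fun v' => (1 - ∑ c : Fin C, x v' c) ^ 2)
        (fun v' _ => sq_nonneg _) (Finset.mem_univ v))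
    have hOH : Aoh ≤ Honehot C Aoh x := by
      unfold Honehot
      nlinarith
    nlinarith [hHC, hann, hcnn, hlnn, hsplit]
  -- (ii) proper coloring
  have hadjzero : ∀ u v : V, G.Adj u v → ∀ c : Fin C, x u c * x v c = 0 := by
    intro u v huv c
    by_contra hne
    have hu1 : x u c = 1 := (hx u c).resolve_left (fun h => hne (by rw [h, zero_mul]))
    have hv1 : x v c = 1 := (hx v c).resolve_left (fun h => hne (by rw [h, mul_zero]))
    have he : s(u, v) ∈ G.edgeFinset := by
      rw [SimpleGraph.mem_edgeFinset, SimpleGraph.mem_edgeSet]; exact huv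
    have hterm : (1:ℝ) ≤ Sym2.lift ⟨fun u v => ∑ c : Fin C, x u c * x v c,
        fun u v => Finset.sum_congr rfl (fun c _ => mul_comm _ _)⟩ s(u, v) := by
      rw [Sym2.lift_mk]
      calc (1:ℝ) = x u c * x v c := by rw [hu1, hv1]; ring
        _ ≤ ∑ c' : Fin C, x u c' * x v c' :=
          Finset.single_le_sum (fun c' _ => mul_nonneg (hx0 u c') (hx0 v c'))
            (Finset.mem_univ c)
    have hsum : (1:ℝ) ≤ ∑ e ∈ G.edgeFinset,
        Sym2.lift ⟨fun u v => ∑ c : Fin C, x u c * x v c,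
          fun u v => Finset.sum_congr rfl (fun c _ => mul_comm _ _)⟩ e :=
      hterm.trans (Finset.single_le_sum hedge_nn he)
    have hA : Aadj ≤ Hadjacency G C Aadj x := by
      unfold Hadjacency
      nlinarith
    nlinarith [hHC, honn, hcnn, hlnn, hsplit]
  -- update formula
  have hHMGCupd : ∀ (c : Fin C) (b : ℝ),
      HMGC G C Aoh Aadj Alink x (Function.update y c b)
        = HMGC G C Aoh Aadj Alink x y + (b - y c)
          + Alink * ((y c - b) * ∑ v : V, x v c) := by
    intro c b
    show Honehot C Aoh x + Hadjacency G C Aadj x + Hcount C (Function.update y c b)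
        + Hlink C Alink x (Function.update y c b) = _
    rw [Hcount_update, Hlink_update, hsplit]
    ring
  have hupdbin : ∀ (c : Fin C) (b : ℝ), (b = 0 ∨ b = 1) →
      ∀ c', Function.update y c b c' = 0 ∨ Function.update y c b c' = 1 := by
    intro c b hb c'
    rcases eq_or_ne c' c with rfl | h
    · rw [Function.update_self]; exact hb
    · rw [Function.update_of_ne h]; exact hy c'
  -- (i) faithful indicators
  have hfaith : ∀ c : Fin C, y c = 1 ↔ 1 ≤ ∑ v : V, x v c := by
    intro c
    constructor
    · intro hyc
      by_contra hlt
      have hcol0 : ∑ v : V, x v c = 0 := by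
        have hno : ¬ ∃ v, x v c = 1 := fun h =>
          hlt ((one_le_sum_iff (fun v => hx v c)).mpr h)
        push_neg at hno
        exact Finset.sum_eq_zero fun v _ => (hx v c).resolve_right (hno v)
      have h' := hmin x (Function.update y c 0) hx (hupdbin c 0 (Or.inl rfl))
      rw [hHMGCupd c 0, hyc, hcol0] at h'
      linarith
    · intro hcol
      rcases hy c with h0 | h1
      · exfalso
        have h' := hmin x (Function.update y c 1) hx (hupdbin c 1 (Or.inr rfl))
        rw [hHMGCupd c 1, h0] at h'
        have : Alink * 1 ≤ Alink * ∑ v : V, x v c :=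
          mul_le_mul_of_nonneg_left hcol hAlinkpos.le
        nlinarith
      · exact h1
  -- value of the minimum
  have hHval : HMGC G C Aoh Aadj Alink x y
      = (((univ.filter fun c : Fin C => y c = 1).card : ℕ) : ℝ) := by
    have hOH0 : Honehot C Aoh x = 0 := by
      unfold Honehot
      rw [Finset.sum_eq_zero (fun v _ => by rw [hone v]; ring)]
      ring
    have hAD0 : Hadjacency G C Aadj x = 0 := by
      unfold Hadjacency
      rw [Finset.sum_eq_zero]
      · ring
      intro e he
      revert he
      refine Sym2.inductionOn e ?_
      intro u v he
      rw [Sym2.lift_mk]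
      have hadj : G.Adj u v := by
        rwa [SimpleGraph.mem_edgeFinset, SimpleGraph.mem_edgeSet] at he
      show (∑ c : Fin C, x u c * x v c) = 0
      exact Finset.sum_eq_zero fun c _ => hadjzero u v hadj c
    have hL0 : Hlink C Alink x y = 0 := by
      unfold Hlink
      rw [Finset.sum_eq_zero]
      · ring
      intro v _
      apply Finset.sum_eq_zero
      intro c _
      rcases hx v c with h | h
      · rw [h, zero_mul]
      · have hc1 : 1 ≤ ∑ v' : V, x v' c :=
          (one_le_sum_iff (fun v' => hx v' c)).mpr ⟨v, h⟩
        rw [h, (hfaith c).mpr hc1]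
        ring
    have hcnt : Hcount C y = ((univ.filter fun c : Fin C => y c = 1).card : ℝ) :=
      sum_binary hy
    rw [hsplit, hOH0, hAD0, hL0, hcnt]
    ring
  -- construct the coloring f from x
  have hex : ∀ v : V, ∃ c : Fin C, (univ.filter fun c => x v c = 1) = {c} := by
    intro v
    apply Finset.card_eq_one.mp
    have hs := sum_binary (hx v)
    rw [hone v] at hs
    exact_mod_cast hs.symm
  choose f hfspec using hex
  have hfx : ∀ v c, x v c = 1 ↔ f v = c := by
    intro v c
    constructor
    · intro h
      have : c ∈ ({f v} : Finset (Fin C)) := by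
        rw [← hfspec v]
        exact Finset.mem_filter.mpr ⟨Finset.mem_univ c, h⟩
      exact (Finset.mem_singleton.mp this).symm
    · rintro rfl
      have : f v ∈ univ.filter (fun c => x v c = 1) := by
        rw [hfspec v]; exact Finset.mem_singleton_self _
      exact (Finset.mem_filter.mp this).2
  have hfproper : ∀ u v, G.Adj u v → f u ≠ f v := by
    intro u v huv heq
    have ha1 : x u (f u) = 1 := (hfx u (f u)).mpr rfl
    have ha2 : x v (f u) = 1 := (hfx v (f u)).mpr heq.symm
    have := hadjzero u v huv (f u)
    rw [ha1, ha2] at this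
    norm_num at this
  have himg : univ.image f = univ.filter (fun c : Fin C => y c = 1) := by
    ext c
    simp only [Finset.mem_image, Finset.mem_filter, Finset.mem_univ, true_and]
    constructor
    · rintro ⟨v, rfl⟩
      exact (hfaith (f v)).mpr
        ((one_le_sum_iff (fun v' => hx v' (f v))).mpr ⟨v, (hfx v (f v)).mpr rfl⟩)
    · intro hc
      obtain ⟨v, hv⟩ := (one_le_sum_iff (fun v' => hx v' c)).mp ((hfaith c).mp hc)
      exact ⟨v, (hfx v c).mp hv⟩
  refine ⟨hone, hadjzero, hfaith, ⟨⟨f, hfproper, by rw [himg]⟩, ?_⟩⟩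
  rintro k ⟨g', hg', rfl⟩
  have hle := hHle g' hg'
  rw [hHval] at hle
  exact_mod_cast hle
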